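/- arXiv:1611.02010 — 5 statements merged into one kernel-verified Lean document; each statement's English description precedes it below -/
import Mathlib

section
/- Let R and W be positive definite matrices and A a full column rank matrix of compatible dimensions. Define F(J) = Aᵀ(R + A(W⁻¹ + J)⁻¹Aᵀ)⁻¹A for positive semidefinite J. Then F is monotone: if J₁ ⪰ J₂ ⪰ 0, then F(J₁) ⪰ F(J₂). -/
open Matrix

lemma inv_anti_aux {k : ℕ} {P Q : Matrix (Fin k) (Fin k) ℝ} (hP : P.PosDef) (hQ : Q.PosDef)
    (h : (P - Q).PosSemidef) : (Q⁻¹ - P⁻¹).PosSemidef := by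
  haveI := hP.isUnit.invertible
  haveI := hQ.isUnit.invertible
  have key : Q⁻¹ - P⁻¹ = (Q⁻¹ - P⁻¹) * Q * (Q⁻¹ - P⁻¹)ᴴ + P⁻¹ * (P - Q) * (P⁻¹)ᴴ := by
    rw [hQ.inv.isHermitian.sub hP.inv.isHermitian, hP.inv.isHermitian]
    simp only [sub_mul, mul_sub, Matrix.mul_assoc, Matrix.inv_mul_of_invertible,
      Matrix.mul_inv_of_invertible, Matrix.mul_one, Matrix.one_mul,
      Matrix.inv_mul_cancel_left_of_invertible, Matrix.mul_inv_cancel_left_of_invertible]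
    abel
  rw [key]
  exact (hQ.posSemidef.mul_mul_conjTranspose_same (Q⁻¹ - P⁻¹)).add
    (h.mul_mul_conjTranspose_same P⁻¹)

theorem stmt_4 {m n : ℕ} (R : Matrix (Fin m) (Fin m) ℝ) (W : Matrix (Fin n) (Fin n) ℝ)
    (A : Matrix (Fin m) (Fin n) ℝ) (hR : R.PosDef) (hW : W.PosDef) (hA : A.rank = n)
    (F : Matrix (Fin n) (Fin n) ℝ → Matrix (Fin n) (Fin n) ℝ)
    (hF : ∀ J, F J = Aᵀ * (R + A * (W⁻¹ + J)⁻¹ * Aᵀ)⁻¹ * A)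
    (J₁ J₂ : Matrix (Fin n) (Fin n) ℝ)
    (hJ₂ : J₂.PosSemidef) (h12 : (J₁ - J₂).PosSemidef) :
    (F J₁ - F J₂).PosSemidef := by
  have hW1 : (W⁻¹ + J₁).PosDef := by
    have hJ₁ : J₁.PosSemidef := by simpa using hJ₂.add h12
    exact hW.inv.add_posSemidef hJ₁
  have hW2 : (W⁻¹ + J₂).PosDef := hW.inv.add_posSemidef hJ₂
  have step1 : ((W⁻¹ + J₂)⁻¹ - (W⁻¹ + J₁)⁻¹).PosSemidef := by
    apply inv_anti_aux hW1 hW2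
    simpa using h12
  have hconjA : ∀ (X : Matrix (Fin n) (Fin n) ℝ), X.PosSemidef →
      (A * X * Aᵀ).PosSemidef := fun X hX => by
    simpa [conjTranspose_eq_transpose_of_trivial] using hX.mul_mul_conjTranspose_same A
  have hP' : (R + A * (W⁻¹ + J₂)⁻¹ * Aᵀ).PosDef :=
    hR.add_posSemidef (hconjA _ hW2.inv.posSemidef)
  have hQ' : (R + A * (W⁻¹ + J₁)⁻¹ * Aᵀ).PosDef :=
    hR.add_posSemidef (hconjA _ hW1.inv.posSemidef)
  have hdiff : ((R + A * (W⁻¹ + J₂)⁻¹ * Aᵀ) - (R + A * (W⁻¹ + J₁)⁻¹ * Aᵀ)).PosSemidef := by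
    have := hconjA _ step1
    simpa [Matrix.mul_sub, Matrix.sub_mul, add_sub_add_left_eq_sub] using this
  have step2 := inv_anti_aux hP' hQ' hdiff
  have final : (F J₁ - F J₂) =
      Aᵀ * ((R + A * (W⁻¹ + J₁)⁻¹ * Aᵀ)⁻¹ - (R + A * (W⁻¹ + J₂)⁻¹ * Aᵀ)⁻¹) * A := by
    rw [hF, hF, Matrix.mul_sub, Matrix.sub_mul]
  rw [final]
  simpa [conjTranspose_eq_transpose_of_trivial] using step2.conjTranspose_mul_mul_same A
end

section
/- Let R and W be positive definite matrices and A a full column rank matrix of compatible dimensions. Define F(J) = Aᵀ(R + A(W⁻¹ + J)⁻¹Aᵀ)⁻¹A for positive definite J. Then for any scalar α > 1 and J ≻ 0, it holds that αF(J) ≻ F(αJ). -/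
open Matrix

lemma aux_smul_inv {k : ℕ} (c : ℝ) (hc : c ≠ 0) {X : Matrix (Fin k) (Fin k) ℝ}
    (hX : IsUnit X.det) : (c • X)⁻¹ = c⁻¹ • X⁻¹ := by
  apply Matrix.inv_eq_right_inv
  rw [Matrix.smul_mul, Matrix.mul_smul, smul_smul, mul_inv_cancel₀ hc, one_smul,
    mul_nonsing_inv _ hX]

lemma aux_smul_posDef {k : ℕ} {M : Matrix (Fin k) (Fin k) ℝ} (hM : M.PosDef) {c : ℝ}
    (hc : 0 < c) : (c • M).PosDef := by
  rw [posDef_iff_dotProduct_mulVec]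
  constructor
  · unfold Matrix.IsHermitian
    rw [conjTranspose_smul, hM.1.eq, star_trivial]
  · intro x hx
    rw [smul_mulVec, dotProduct_smul, smul_eq_mul]
    exact mul_pos hc (hM.dotProduct_mulVec_pos hx)

lemma aux_sym_dot {k : ℕ} {Y : Matrix (Fin k) (Fin k) ℝ} (hY : Y.IsHermitian)
    (u z : Fin k → ℝ) : u ⬝ᵥ (Y *ᵥ z) = (Y *ᵥ u) ⬝ᵥ z := by
  rw [dotProduct_mulVec, ← vecMul_transpose,
    show Yᵀ = Y from by rw [← conjTranspose_eq_transpose_of_trivial, hY.eq]]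

lemma aux_inv_sub_inv {k : ℕ} {X Y : Matrix (Fin k) (Fin k) ℝ}
    (hY : Y.PosDef) (hD : (X - Y).PosDef) : (Y⁻¹ - X⁻¹).PosDef := by
  have hX : X.PosDef := by simpa using hY.add hD
  have hXdet : IsUnit X.det := isUnit_iff_ne_zero.mpr hX.det_pos.ne'
  have hYdet : IsUnit Y.det := isUnit_iff_ne_zero.mpr hY.det_pos.ne'
  refine PosDef.of_dotProduct_mulVec_pos (hY.inv.1.sub hX.inv.1) (fun x hx => ?_)
  rw [star_trivial]
  set z := X⁻¹ *ᵥ x with hzdef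
  set u := Y⁻¹ *ᵥ x with hudef
  have hXz : X *ᵥ z = x := by
    rw [hzdef, mulVec_mulVec, mul_nonsing_inv _ hXdet, one_mulVec]
  have hYu : Y *ᵥ u = x := by
    rw [hudef, mulVec_mulVec, mul_nonsing_inv _ hYdet, one_mulVec]
  have hz : z ≠ 0 := fun h => hx (by rw [← hXz, h, mulVec_zero])
  have e4 : 0 < z ⬝ᵥ ((X - Y) *ᵥ z) := by have := hD.dotProduct_mulVec_pos hz; rwa [star_trivial] at this
  have e1 : x ⬝ᵥ z = z ⬝ᵥ (Y *ᵥ z) + z ⬝ᵥ ((X - Y) *ᵥ z) := by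
    rw [dotProduct_comm, ← hXz]
    rw [aux_sym_dot hX.1 z z]  -- z ⬝ᵥ X *ᵥ z = (X *ᵥ z) ⬝ᵥ z ... careful
    rw [← aux_sym_dot hX.1 z z]
    rw [sub_mulVec, dotProduct_sub]
    ring
  have e2 : 0 ≤ (z - u) ⬝ᵥ (Y *ᵥ (z - u)) := by
    have := hY.posSemidef.dotProduct_mulVec_nonneg (z - u); rwa [star_trivial] at this
  have e3 : (z - u) ⬝ᵥ (Y *ᵥ (z - u)) = z ⬝ᵥ (Y *ᵥ z) - 2 * (x ⬝ᵥ z) + x ⬝ᵥ u := by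
    have h1 : Y *ᵥ (z - u) = Y *ᵥ z - x := by rw [mulVec_sub, hYu]
    rw [h1, sub_dotProduct, dotProduct_sub, dotProduct_sub,
      aux_sym_dot hY.1 u z, hYu, dotProduct_comm z x, dotProduct_comm u x]
    ring
  have goal_eq : x ⬝ᵥ ((Y⁻¹ - X⁻¹) *ᵥ x) = x ⬝ᵥ u - x ⬝ᵥ z := by
    rw [sub_mulVec, dotProduct_sub]
  rw [goal_eq]
  linarith

lemma aux_conj_posDef {m n : ℕ} {P : Matrix (Fin m) (Fin m) ℝ} (hP : P.PosDef)
    {A : Matrix (Fin m) (Fin n) ℝ} (hA : A.rank = n) : (Aᵀ * P * A).PosDef := by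
  have hherm : (Aᵀ * P * A).IsHermitian := by
    rw [← conjTranspose_eq_transpose_of_trivial]
    exact isHermitian_conjTranspose_mul_mul A hP.1
  refine PosDef.of_dotProduct_mulVec_pos hherm (fun x hx => ?_)
  have hAx : A *ᵥ x ≠ 0 := by
    intro h
    have hker : LinearMap.ker A.mulVecLin = ⊥ := by
      have h1 := LinearMap.finrank_range_add_finrank_ker A.mulVecLin
      rw [show Module.finrank ℝ (LinearMap.range A.mulVecLin) = n from hA,
        Module.finrank_pi] at h1
      simp only [Fintype.card_fin] at h1
      have h2 : Module.finrank ℝ (LinearMap.ker A.mulVecLin) = 0 := by omega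
      exact Submodule.finrank_eq_zero.mp h2
    exact hx (by simpa [hker] using LinearMap.mem_ker.mpr (show A.mulVecLin x = 0 from h))
  have hrw : x ⬝ᵥ ((Aᵀ * P * A) *ᵥ x) = (A *ᵥ x) ⬝ᵥ (P *ᵥ (A *ᵥ x)) := by
    rw [← mulVec_mulVec, ← mulVec_mulVec, dotProduct_mulVec x Aᵀ, vecMul_transpose]
  rw [star_trivial, hrw]
  exact hP.dotProduct_mulVec_pos hAx

theorem stmt_5 {m n : ℕ} (R : Matrix (Fin m) (Fin m) ℝ) (W : Matrix (Fin n) (Fin n) ℝ)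
    (A : Matrix (Fin m) (Fin n) ℝ) (hR : R.PosDef) (hW : W.PosDef) (hA : A.rank = n)
    (F : Matrix (Fin n) (Fin n) ℝ → Matrix (Fin n) (Fin n) ℝ)
    (hF : ∀ J, F J = Aᵀ * (R + A * (W⁻¹ + J)⁻¹ * Aᵀ)⁻¹ * A)
    (α : ℝ) (hα : 1 < α) (J : Matrix (Fin n) (Fin n) ℝ) (hJ : J.PosDef) :
    (α • F J - F (α • J)).PosDef := by
  have hα0 : (0:ℝ) < α := lt_trans one_pos hα
  have hαinv : (0:ℝ) < α⁻¹ := inv_pos.mpr hα0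
  have hαinv1 : α⁻¹ < 1 := (inv_lt_one₀ hα0).mpr hα
  have hWinv : (W⁻¹).PosDef := hW.inv
  have hM : (W⁻¹ + J).PosDef := hWinv.add hJ
  have hMα : (W⁻¹ + α • J).PosDef := hWinv.add (aux_smul_posDef hJ hα0)
  have hαM : (α • (W⁻¹ + J)).PosDef := aux_smul_posDef hM hα0
  have psd : ∀ (P : Matrix (Fin n) (Fin n) ℝ), P.PosSemidef → (A * P * Aᵀ).PosSemidef := by
    intro P hP
    have := hP.mul_mul_conjTranspose_same A
    rwa [conjTranspose_eq_transpose_of_trivial] at this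
  have hG : (R + A * (W⁻¹ + J)⁻¹ * Aᵀ).PosDef := hR.add_posSemidef (psd _ hM.inv.posSemidef)
  have hB : (R + A * (W⁻¹ + α • J)⁻¹ * Aᵀ).PosDef := hR.add_posSemidef (psd _ hMα.inv.posSemidef)
  have hC : (α⁻¹ • R + A * (α • (W⁻¹ + J))⁻¹ * Aᵀ).PosDef :=
    (aux_smul_posDef hR hαinv).add_posSemidef (psd _ hαM.inv.posSemidef)
  -- C = α⁻¹ • G
  have hCe : α⁻¹ • (R + A * (W⁻¹ + J)⁻¹ * Aᵀ)
      = α⁻¹ • R + A * (α • (W⁻¹ + J))⁻¹ * Aᵀ := by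
    rw [aux_smul_inv α hα0.ne' (isUnit_iff_ne_zero.mpr hM.det_pos.ne'), smul_add]
    congr 1
    rw [Matrix.mul_smul, Matrix.smul_mul]
  have hCinv : (α⁻¹ • R + A * (α • (W⁻¹ + J))⁻¹ * Aᵀ)⁻¹
      = α • (R + A * (W⁻¹ + J)⁻¹ * Aᵀ)⁻¹ := by
    rw [← hCe, aux_smul_inv α⁻¹ hαinv.ne' (isUnit_iff_ne_zero.mpr hG.det_pos.ne'), inv_inv]
  -- B - C PosDef
  have hinner : ((W⁻¹ + α • J)⁻¹ - (α • (W⁻¹ + J))⁻¹).PosDef := by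
    refine aux_inv_sub_inv hMα ?_
    have h1 : α • (W⁻¹ + J) - (W⁻¹ + α • J) = (α - 1) • W⁻¹ := by
      rw [smul_add, sub_smul, one_smul]; abel
    rw [h1]
    exact aux_smul_posDef hWinv (by linarith)
  have hBC : ((R + A * (W⁻¹ + α • J)⁻¹ * Aᵀ)
      - (α⁻¹ • R + A * (α • (W⁻¹ + J))⁻¹ * Aᵀ)).PosDef := by
    have h2 : (R + A * (W⁻¹ + α • J)⁻¹ * Aᵀ) - (α⁻¹ • R + A * (α • (W⁻¹ + J))⁻¹ * Aᵀ)
        = (1 - α⁻¹) • R + A * ((W⁻¹ + α • J)⁻¹ - (α • (W⁻¹ + J))⁻¹) * Aᵀ := by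
      rw [Matrix.mul_sub, Matrix.sub_mul, sub_smul, one_smul]; abel
    rw [h2]
    exact (aux_smul_posDef hR (by linarith)).add_posSemidef (psd _ hinner.posSemidef)
  have hfin : ((α⁻¹ • R + A * (α • (W⁻¹ + J))⁻¹ * Aᵀ)⁻¹
      - (R + A * (W⁻¹ + α • J)⁻¹ * Aᵀ)⁻¹).PosDef := aux_inv_sub_inv hC hBC
  have hgoal : α • F J - F (α • J)
      = Aᵀ * ((α⁻¹ • R + A * (α • (W⁻¹ + J))⁻¹ * Aᵀ)⁻¹
        - (R + A * (W⁻¹ + α • J)⁻¹ * Aᵀ)⁻¹) * A := by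
    rw [hF J, hF (α • J), Matrix.mul_sub, Matrix.sub_mul, hCinv,
      Matrix.mul_smul, Matrix.smul_mul]
  rw [hgoal]
  exact aux_conj_posDef hfin hA
end

section
/- Let F be a map on positive definite matrices that is monotone (J₁ ⪰ J₂ ≻ 0 implies F(J₁) ⪰ F(J₂)) and strictly subhomogeneous (α > 1 and J ≻ 0 imply αF(J) ≻ F(αJ)). If J* ≻ 0 and J̃* ≻ 0 are both fixed points of F, then J* = J̃*. -/
open Matrix

private lemma quad_smul {n : ℕ} (M : Matrix (Fin n) (Fin n) ℝ) (c : ℝ) (x : Fin n → ℝ) :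
    (c • x) ⬝ᵥ M *ᵥ (c • x) = c ^ 2 * (x ⬝ᵥ M *ᵥ x) := by
  simp only [mulVec_smul, smul_dotProduct, dotProduct_smul, smul_eq_mul]
  ring

private lemma psd_smul {n : ℕ} {A : Matrix (Fin n) (Fin n) ℝ} (hA : A.PosSemidef) {c : ℝ}
    (hc : 0 ≤ c) : (c • A).PosSemidef := by
  refine PosSemidef.of_dotProduct_mulVec_nonneg ?_ ?_
  · show (c • A)ᴴ = c • A
    rw [conjTranspose_smul, star_trivial, hA.1.eq]
  · intro x
    rw [smul_mulVec, dotProduct_smul, smul_eq_mul]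
    exact mul_nonneg hc (by simpa using hA.dotProduct_mulVec_nonneg x)

private lemma herm_smul_sub {n : ℕ} {D J : Matrix (Fin n) (Fin n) ℝ} (hD : D.IsHermitian)
    (hJ : J.IsHermitian) (c : ℝ) : (D - c • J).IsHermitian := by
  have h : (c • J).IsHermitian := by
    show (c • J)ᴴ = c • J
    rw [conjTranspose_smul, star_trivial, hJ.eq]
  exact hD.sub h

/-- For positive definite D and J (n ≥ 1) there is ε > 0 with D - ε J still psd. -/
private lemma exists_eps {n : ℕ} (hn : 0 < n) {D J : Matrix (Fin n) (Fin n) ℝ}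
    (hD : D.PosDef) (hJ : J.PosDef) :
    ∃ ε : ℝ, 0 < ε ∧ (D - ε • J).PosSemidef := by
  haveI : Nonempty (Fin n) := Fin.pos_iff_nonempty.mp hn
  have hS : IsCompact (Metric.sphere (0 : Fin n → ℝ) 1) := isCompact_sphere _ _
  have hSne : (Metric.sphere (0 : Fin n → ℝ) 1).Nonempty :=
    NormedSpace.sphere_nonempty.mpr zero_le_one
  have contD : Continuous (fun x : Fin n → ℝ => x ⬝ᵥ D *ᵥ x) :=
    continuous_id.dotProduct (continuous_const.matrix_mulVec continuous_id)
  have contJ : Continuous (fun x : Fin n → ℝ => x ⬝ᵥ J *ᵥ x) :=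
    continuous_id.dotProduct (continuous_const.matrix_mulVec continuous_id)
  obtain ⟨x₀, hx₀S, hmin'⟩ := hS.exists_isMinOn hSne contD.continuousOn
  obtain ⟨x₁, hx₁S, hmax'⟩ := hS.exists_isMaxOn hSne contJ.continuousOn
  have hmin : ∀ u ∈ Metric.sphere (0 : Fin n → ℝ) 1, x₀ ⬝ᵥ D *ᵥ x₀ ≤ u ⬝ᵥ D *ᵥ u :=
    fun u hu => hmin' hu
  have hmax : ∀ u ∈ Metric.sphere (0 : Fin n → ℝ) 1, u ⬝ᵥ J *ᵥ u ≤ x₁ ⬝ᵥ J *ᵥ x₁ :=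
    fun u hu => hmax' hu
  have hx₀ : x₀ ≠ 0 := by
    intro h; rw [h] at hx₀S; simpa using hx₀S
  have hx₁ : x₁ ≠ 0 := by
    intro h; rw [h] at hx₁S; simpa using hx₁S
  have hc : 0 < x₀ ⬝ᵥ D *ᵥ x₀ := by simpa using hD.dotProduct_mulVec_pos hx₀
  have hM : 0 < x₁ ⬝ᵥ J *ᵥ x₁ := by simpa using hJ.dotProduct_mulVec_pos hx₁
  set c := x₀ ⬝ᵥ D *ᵥ x₀
  set M := x₁ ⬝ᵥ J *ᵥ x₁
  refine ⟨c / M, div_pos hc hM, PosSemidef.of_dotProduct_mulVec_nonneg (herm_smul_sub hD.1 hJ.1 _) ?_⟩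
  intro x
  rw [star_trivial, sub_mulVec, dotProduct_sub, smul_mulVec, dotProduct_smul, smul_eq_mul,
    sub_nonneg]
  rcases eq_or_ne x 0 with rfl | hx
  · simp
  · have hxnorm : (0 : ℝ) < ‖x‖ := norm_pos_iff.mpr hx
    set u := ‖x‖⁻¹ • x with hu
    have huS : u ∈ Metric.sphere (0 : Fin n → ℝ) 1 := by
      simp [hu, norm_smul, abs_of_nonneg (inv_nonneg.mpr hxnorm.le),
        inv_mul_cancel₀ hxnorm.ne']
    have hxu : x = ‖x‖ • u := by
      rw [hu, smul_smul, mul_inv_cancel₀ hxnorm.ne', one_smul]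
    have hfu : c ≤ u ⬝ᵥ D *ᵥ u := hmin u huS
    have hgu : u ⬝ᵥ J *ᵥ u ≤ M := hmax u huS
    have hgu0 : 0 ≤ u ⬝ᵥ J *ᵥ u := by simpa using hJ.posSemidef.dotProduct_mulVec_nonneg u
    have key : c / M * (u ⬝ᵥ J *ᵥ u) ≤ u ⬝ᵥ D *ᵥ u := by
      have h1 : c / M * (u ⬝ᵥ J *ᵥ u) ≤ c / M * M :=
        mul_le_mul_of_nonneg_left hgu (div_nonneg hc.le hM.le)
      rw [div_mul_cancel₀ _ hM.ne'] at h1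
      exact h1.trans hfu
    have e1 : x ⬝ᵥ J *ᵥ x = ‖x‖ ^ 2 * (u ⬝ᵥ J *ᵥ u) := by
      conv_lhs => rw [hxu, quad_smul]
    have e2 : x ⬝ᵥ D *ᵥ x = ‖x‖ ^ 2 * (u ⬝ᵥ D *ᵥ u) := by
      conv_lhs => rw [hxu, quad_smul]
    have h2 : ‖x‖ ^ 2 * (c / M * (u ⬝ᵥ J *ᵥ u)) ≤ ‖x‖ ^ 2 * (u ⬝ᵥ D *ᵥ u) :=
      mul_le_mul_of_nonneg_left key (by positivity)
    rw [e1, e2]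
    nlinarith [h2]

/-- One-sided comparison of fixed points. -/
private lemma fixed_le {n : ℕ} (hn : 0 < n)
    (F : Matrix (Fin n) (Fin n) ℝ → Matrix (Fin n) (Fin n) ℝ)
    (hmono : ∀ J₁ J₂ : Matrix (Fin n) (Fin n) ℝ,
      J₂.PosDef → (J₁ - J₂).PosSemidef → (F J₁ - F J₂).PosSemidef)
    (hsub : ∀ (α : ℝ) (J : Matrix (Fin n) (Fin n) ℝ),
      1 < α → J.PosDef → (α • F J - F (α • J)).PosDef)
    (Jstar Jtil : Matrix (Fin n) (Fin n) ℝ)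
    (hJstar : Jstar.PosDef) (hJtil : Jtil.PosDef)
    (hfix1 : F Jstar = Jstar) (hfix2 : F Jtil = Jtil) :
    (Jstar - Jtil).PosSemidef := by
  set T : Set ℝ := {t : ℝ | 1 ≤ t ∧ (t • Jstar - Jtil).PosSemidef} with hT
  -- T is nonempty
  obtain ⟨ε, hε, hεpsd⟩ := exists_eps hn hJstar hJtil
  have hTne : T.Nonempty := by
    refine ⟨max 1 ε⁻¹, le_max_left _ _, ?_⟩
    have h1 : (max 1 ε⁻¹) • Jstar - Jtil
        = (max 1 ε⁻¹ - ε⁻¹) • Jstar + ε⁻¹ • (Jstar - ε • Jtil) := by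
      rw [smul_sub, smul_smul, inv_mul_cancel₀ hε.ne', one_smul, sub_smul]
      abel
    rw [h1]
    exact ((psd_smul hJstar.posSemidef (sub_nonneg.mpr (le_max_right 1 ε⁻¹))).add
      (psd_smul hεpsd (by positivity)))
  have hTbdd : BddBelow T := ⟨1, fun t ht => ht.1⟩
  set ξ := sInf T with hξ
  have hξ1 : 1 ≤ ξ := le_csInf hTne fun t ht => ht.1
  -- ξ ∈ T
  have hξpsd : (ξ • Jstar - Jtil).PosSemidef := by
    refine PosSemidef.of_dotProduct_mulVec_nonneg ?_ ?_
    · show (ξ • Jstar - Jtil)ᴴ = ξ • Jstar - Jtil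
      rw [conjTranspose_sub, conjTranspose_smul, star_trivial, hJstar.1.eq, hJtil.1.eq]
    · intro x
      rw [star_trivial, sub_mulVec, dotProduct_sub, smul_mulVec, dotProduct_smul,
        smul_eq_mul, sub_nonneg]
      set a := x ⬝ᵥ Jstar *ᵥ x
      set b := x ⬝ᵥ Jtil *ᵥ x
      have ha : 0 ≤ a := by simpa using hJstar.posSemidef.dotProduct_mulVec_nonneg x
      have hmem : ∀ t ∈ T, b ≤ t * a := by
        intro t ht
        have := ht.2.dotProduct_mulVec_nonneg x
        rw [star_trivial, sub_mulVec, dotProduct_sub, smul_mulVec, dotProduct_smul,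
          smul_eq_mul, sub_nonneg] at this
        exact this
      by_contra hcon
      push_neg at hcon
      rcases eq_or_lt_of_le ha with ha0 | hapos
      · obtain ⟨t, ht⟩ := hTne
        have := hmem t ht
        rw [← ha0, mul_zero] at this
        rw [← ha0, mul_zero] at hcon
        linarith
      · have hlb : b / a ≤ ξ := le_csInf hTne fun t ht => by
          rw [div_le_iff₀ hapos]
          exact hmem t ht
        rw [div_le_iff₀ hapos] at hlb
        nlinarith
  -- ξ = 1 or ξ > 1
  rcases eq_or_lt_of_le hξ1 with h1 | hgt
  · rw [← h1, one_smul] at hξpsd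
    exact hξpsd
  · exfalso
    -- strict subhomogeneity step
    have hD1 : ((ξ • Jstar) - F (ξ • Jstar)).PosDef := by
      have := hsub ξ Jstar hgt hJstar
      rwa [hfix1] at this
    have hD2 : (F (ξ • Jstar) - Jtil).PosSemidef := by
      have := hmono (ξ • Jstar) Jtil hJtil hξpsd
      rwa [hfix2] at this
    have hDpos : (ξ • Jstar - Jtil).PosDef := by
      have := hD1.add_posSemidef hD2
      rwa [sub_add_sub_cancel] at this
    obtain ⟨δ, hδ, hδpsd⟩ := exists_eps hn hDpos hJstar
    set δ' := min δ (ξ - 1) with hδ'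
    have hδ'pos : 0 < δ' := lt_min hδ (by linarith)
    have hmem : ξ - δ' ∈ T := by
      constructor
      · have : δ' ≤ ξ - 1 := min_le_right _ _
        linarith
      · have h2 : (ξ - δ') • Jstar - Jtil
            = (ξ • Jstar - Jtil - δ • Jstar) + (δ - δ') • Jstar := by
          rw [sub_smul, sub_smul]
          abel
        rw [h2]
        have hdd : (0:ℝ) ≤ δ - δ' := by simp [hδ', min_le_left]
        exact hδpsd.add (psd_smul hJstar.posSemidef hdd)
    have := csInf_le hTbdd hmem
    rw [← hξ] at this
    linarith

theorem stmt_8 {n : ℕ}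
    (F : Matrix (Fin n) (Fin n) ℝ → Matrix (Fin n) (Fin n) ℝ)
    (hmono : ∀ J₁ J₂ : Matrix (Fin n) (Fin n) ℝ,
      J₂.PosDef → (J₁ - J₂).PosSemidef → (F J₁ - F J₂).PosSemidef)
    (hsub : ∀ (α : ℝ) (J : Matrix (Fin n) (Fin n) ℝ),
      1 < α → J.PosDef → (α • F J - F (α • J)).PosDef)
    (Jstar Jtil : Matrix (Fin n) (Fin n) ℝ)
    (hJstar : Jstar.PosDef) (hJtil : Jtil.PosDef)
    (hfix1 : F Jstar = Jstar) (hfix2 : F Jtil = Jtil) :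
    Jstar = Jtil := by
  rcases Nat.eq_zero_or_pos n with rfl | hn
  · exact Subsingleton.elim _ _
  have h1 := fixed_le hn F hmono hsub Jstar Jtil hJstar hJtil hfix1 hfix2
  have h2 := fixed_le hn F hmono hsub Jtil Jstar hJtil hJstar hfix2 hfix1
  -- antisymmetry
  have hzero : ∀ x : Fin n → ℝ, (Jstar - Jtil) *ᵥ x = 0 := by
    intro x
    rw [← h1.dotProduct_mulVec_zero_iff x, star_trivial]
    have ha := h1.dotProduct_mulVec_nonneg x
    have hb := h2.dotProduct_mulVec_nonneg x
    rw [star_trivial] at ha hb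
    have hba : Jtil - Jstar = -(Jstar - Jtil) := by abel
    rw [hba, neg_mulVec, dotProduct_neg] at hb
    linarith
  have : Jstar - Jtil = 0 := by
    ext i j
    have := congrFun (hzero (Pi.single j 1)) i
    simpa using this
  exact sub_eq_zero.mp this
end

section
/- Let F be monotone and strictly subhomogeneous on positive definite matrices with unique fixed point J* ≻ 0, and suppose F(J) ⪰ L ≻ 0 for all J ⪰ 0. If α > 1 satisfies αJ* ⪰ F(J⁰) for arbitrary J⁰ ⪰ 0, then the iterates Fℓ(αJ*) form a nonincreasing sequence converging to J*, the iterates Fℓ(L) form a nondecreasing sequence converging to J*, and hence Fℓ(J⁰) → J* for every J⁰ ⪰ 0. -/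
open Matrix Filter

section Aux

variable {n : ℕ}

private lemma aux_psd_smul {c : ℝ} {M : Matrix (Fin n) (Fin n) ℝ} (hc : 0 ≤ c)
    (hM : M.PosSemidef) : (c • M).PosSemidef := by
  refine .of_dotProduct_mulVec_nonneg ?_ ?_
  · unfold Matrix.IsHermitian
    rw [conjTranspose_smul, hM.1]
    simp
  · intro x
    rw [smul_mulVec, dotProduct_smul]
    exact mul_nonneg hc (hM.dotProduct_mulVec_nonneg x)

private lemma aux_pd_smul {c : ℝ} {M : Matrix (Fin n) (Fin n) ℝ} (hc : 0 < c)
    (hM : M.PosDef) : (c • M).PosDef := by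
  refine .of_dotProduct_mulVec_pos ?_ ?_
  · unfold Matrix.IsHermitian
    rw [conjTranspose_smul, hM.1]
    simp
  · intro x hx
    rw [smul_mulVec, dotProduct_smul]
    exact mul_pos hc (hM.dotProduct_mulVec_pos hx)

private lemma aux_psd_trans {X Y Z : Matrix (Fin n) (Fin n) ℝ}
    (h1 : (X - Y).PosSemidef) (h2 : (Y - Z).PosSemidef) : (X - Z).PosSemidef := by
  have := h1.add h2
  rwa [sub_add_sub_cancel] at this

private lemma aux_psd_diag {M : Matrix (Fin n) (Fin n) ℝ} (hM : M.PosSemidef) (i : Fin n) :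
    0 ≤ M i i := by
  have := hM.dotProduct_mulVec_nonneg (Pi.single i 1)
  simpa [single_dotProduct, mulVec_single] using this

private lemma aux_psd_abs_entry {M : Matrix (Fin n) (Fin n) ℝ} (hM : M.PosSemidef) (i j : Fin n) :
    |M i j| ≤ (M i i + M j j) / 2 := by
  have hsym : M j i = M i j := by
    have h2 : M i j = M j i := by simpa using hM.1.apply j i
    exact h2.symm
  have key : ∀ c : ℝ, 0 ≤ M i i + c * (2 * M i j) + c * c * M j j := by
    intro c
    have := hM.dotProduct_mulVec_nonneg ((Pi.single i 1 : Fin n → ℝ) + c • (Pi.single j 1 : Fin n → ℝ))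
    rw [star_trivial, mulVec_add, mulVec_smul, add_dotProduct, smul_dotProduct,
      dotProduct_add, dotProduct_add, dotProduct_smul, dotProduct_smul] at this
    simp only [single_dotProduct, mulVec_single, one_mul, mul_one, smul_eq_mul,
      MulOpposite.op_one, one_smul, Matrix.col_apply] at this
    rw [hsym] at this
    nlinarith [this]
  rcases abs_cases (M i j) with ⟨h1, h2⟩ | ⟨h1, h2⟩
  · have := key (-1); nlinarith
  · have := key 1; nlinarith

private noncomputable def auxQuad (M : Matrix (Fin n) (Fin n) ℝ) (x : Fin n → ℝ) : ℝ :=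
  x ⬝ᵥ M *ᵥ x

private lemma aux_quad_continuous (M : Matrix (Fin n) (Fin n) ℝ) : Continuous (auxQuad M) := by
  unfold auxQuad
  simp only [dotProduct, mulVec]
  fun_prop

private lemma aux_quad_smul (M : Matrix (Fin n) (Fin n) ℝ) (c : ℝ) (x : Fin n → ℝ) :
    auxQuad M (c • x) = c ^ 2 * auxQuad M x := by
  unfold auxQuad
  rw [mulVec_smul, smul_dotProduct, dotProduct_smul]
  ring_nf

private lemma aux_exists_eps {G M : Matrix (Fin n) (Fin n) ℝ} (hG : G.PosDef)
    (hM : M.PosSemidef) : ∃ ε : ℝ, 0 < ε ∧ (G - ε • M).PosSemidef := by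
  rcases Nat.eq_zero_or_pos n with hn | hn
  · refine ⟨1, one_pos, .of_dotProduct_mulVec_nonneg ?_ ?_⟩
    · unfold Matrix.IsHermitian
      ext i j
      exact absurd i.2 (by omega)
    · intro x
      subst hn
      simp [dotProduct]
  · haveI : Nonempty (Fin n) := ⟨⟨0, hn⟩⟩
    have hsph : (Metric.sphere (0 : Fin n → ℝ) 1).Nonempty :=
      NormedSpace.sphere_nonempty.mpr zero_le_one
    have hcpt : IsCompact (Metric.sphere (0 : Fin n → ℝ) 1) := isCompact_sphere 0 1
    obtain ⟨u, hu, hmin⟩ := hcpt.exists_isMinOn hsph (aux_quad_continuous G).continuousOn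
    obtain ⟨v, hv, hmax⟩ := hcpt.exists_isMaxOn hsph (aux_quad_continuous M).continuousOn
    have hune : u ≠ 0 := by
      intro h
      rw [Metric.mem_sphere, h] at hu
      simp at hu
    have hm : 0 < auxQuad G u := by
      have := hG.dotProduct_mulVec_pos hune
      rwa [star_trivial] at this
    set m := auxQuad G u with hmdef
    set c := auxQuad M v with hcdef
    refine ⟨m / max c 1, div_pos hm (lt_max_of_lt_right one_pos), .of_dotProduct_mulVec_nonneg ?_ ?_⟩
    · unfold Matrix.IsHermitian
      rw [conjTranspose_sub, conjTranspose_smul, hG.1, hM.1]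
      simp
    · intro x
      rw [star_trivial, sub_mulVec, dotProduct_sub, smul_mulVec, dotProduct_smul,
        sub_nonneg, smul_eq_mul]
      show (m / max c 1) * auxQuad M x ≤ auxQuad G x
      rcases eq_or_ne x 0 with rfl | hx
      · simp [auxQuad]
      · have hnx : (0:ℝ) < ‖x‖ := norm_pos_iff.mpr hx
        set w : Fin n → ℝ := ‖x‖⁻¹ • x with hwdef
        have hw : w ∈ Metric.sphere (0 : Fin n → ℝ) 1 := by
          simp [hwdef, norm_smul, abs_of_pos (inv_pos.mpr hnx), inv_mul_cancel₀ hnx.ne']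
        have hxw : x = ‖x‖ • w := by
          rw [hwdef, smul_smul, mul_inv_cancel₀ hnx.ne', one_smul]
        have h1 : auxQuad G x = ‖x‖ ^ 2 * auxQuad G w := by conv_lhs => rw [hxw, aux_quad_smul]
        have h2 : auxQuad M x = ‖x‖ ^ 2 * auxQuad M w := by conv_lhs => rw [hxw, aux_quad_smul]
        have hGw : m ≤ auxQuad G w := hmin hw
        have hMw : auxQuad M w ≤ c := hmax hw
        have hkey : (m / max c 1) * c ≤ m := by
          rw [div_mul_eq_mul_div, div_le_iff₀ (lt_max_of_lt_right one_pos)]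
          exact mul_le_mul_of_nonneg_left (le_max_left c 1) hm.le
        have hMw0 : 0 ≤ auxQuad M w := by have := hM.dotProduct_mulVec_nonneg w; rwa [star_trivial] at this
        rw [h1, h2]
        have hfin : (m / max c 1) * auxQuad M w ≤ m := by
          calc (m / max c 1) * auxQuad M w ≤ (m / max c 1) * c :=
                mul_le_mul_of_nonneg_left hMw (div_pos hm (lt_max_of_lt_right one_pos)).le
            _ ≤ m := hkey
        nlinarith [sq_nonneg ‖x‖, hfin, hGw, mul_le_mul_of_nonneg_left hfin (sq_nonneg ‖x‖)]

private lemma aux_tendsto_zero {X : ℕ → Matrix (Fin n) (Fin n) ℝ}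
    {M : Matrix (Fin n) (Fin n) ℝ} (hM : M.PosSemidef)
    (h : ∀ ε : ℝ, 0 < ε → ∃ N, ∀ k ≥ N, (X k).PosSemidef ∧ (ε • M - X k).PosSemidef) :
    Filter.Tendsto X Filter.atTop (nhds 0) := by
  apply tendsto_pi_nhds.mpr
  intro i
  apply tendsto_pi_nhds.mpr
  intro j
  rw [Metric.tendsto_atTop]
  intro ε' hε'
  have hdi := aux_psd_diag hM i
  have hdj := aux_psd_diag hM j
  have hC : (0:ℝ) < (M i i + M j j) / 2 + 1 := by linarith
  set C := (M i i + M j j) / 2 + 1 with hCdef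
  obtain ⟨N, hN⟩ := h (ε' / C) (div_pos hε' hC)
  refine ⟨N, fun k hk => ?_⟩
  obtain ⟨h1, h2⟩ := hN k hk
  have hpos : 0 < ε' / C := div_pos hε' hC
  have hd1 : X k i i ≤ ε' / C * M i i := by
    have := aux_psd_diag h2 i
    simp only [Matrix.sub_apply, Matrix.smul_apply, smul_eq_mul] at this
    linarith
  have hd2 : X k j j ≤ ε' / C * M j j := by
    have := aux_psd_diag h2 j
    simp only [Matrix.sub_apply, Matrix.smul_apply, smul_eq_mul] at this
    linarith
  have habs := aux_psd_abs_entry h1 i j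
  have h0 : (0 : Matrix (Fin n) (Fin n) ℝ) i j = 0 := rfl
  rw [Real.dist_eq, h0, sub_zero]
  calc |X k i j| ≤ (X k i i + X k j j) / 2 := habs
    _ ≤ ε' / C * ((M i i + M j j) / 2) := by linarith
    _ < ε' / C * C := by
        apply mul_lt_mul_of_pos_left ?_ hpos
        rw [hCdef]; linarith
    _ = ε' := div_mul_cancel₀ ε' hC.ne'

end Aux

theorem stmt_10 {n : ℕ}
    (F : Matrix (Fin n) (Fin n) ℝ → Matrix (Fin n) (Fin n) ℝ)
    (L U Jstar : Matrix (Fin n) (Fin n) ℝ) (hL : L.PosDef) (hJstar : Jstar.PosDef)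
    (hmono : ∀ J₁ J₂ : Matrix (Fin n) (Fin n) ℝ,
      J₂.PosSemidef → (J₁ - J₂).PosSemidef → (F J₁ - F J₂).PosSemidef)
    (hsub : ∀ (α : ℝ) (J : Matrix (Fin n) (Fin n) ℝ),
      1 < α → J.PosDef → (α • F J - F (α • J)).PosDef)
    (hbound : ∀ J : Matrix (Fin n) (Fin n) ℝ, J.PosSemidef →
      (F J - L).PosSemidef ∧ (U - F J).PosSemidef)
    (hfix : F Jstar = Jstar)
    (huniq : ∀ J : Matrix (Fin n) (Fin n) ℝ, J.PosDef → F J = J → J = Jstar)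
    (hJstarL : (Jstar - L).PosSemidef) (hJstarU : (U - Jstar).PosSemidef)
    (J0 : Matrix (Fin n) (Fin n) ℝ) (hJ0 : J0.PosSemidef)
    (α : ℝ) (hα : 1 < α) (hαJ : (α • Jstar - F J0).PosSemidef) :
    (∀ ℓ, (F^[ℓ] (α • Jstar) - F^[ℓ + 1] (α • Jstar)).PosSemidef) ∧
    Filter.Tendsto (fun ℓ => F^[ℓ] (α • Jstar)) Filter.atTop (nhds Jstar) ∧
    (∀ ℓ, (F^[ℓ + 1] L - F^[ℓ] L).PosSemidef) ∧
    Filter.Tendsto (fun ℓ => F^[ℓ] L) Filter.atTop (nhds Jstar) ∧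
    Filter.Tendsto (fun ℓ => F^[ℓ] J0) Filter.atTop (nhds Jstar) := by
  have hα0 : (0:ℝ) < α := lt_trans one_pos hα
  have hJpsd := hJstar.posSemidef
  -- F maps psd to psd
  have hFpsd : ∀ J : Matrix (Fin n) (Fin n) ℝ, J.PosSemidef → (F J).PosSemidef := by
    intro J hJ
    have h := (hbound J hJ).1
    have := h.add hL.posSemidef
    rwa [sub_add_cancel] at this
  -- facts about the upper sequence A k = F^[k] (α • Jstar)
  have hAfacts : ∀ k : ℕ, (F^[k] (α • Jstar)).PosSemidef ∧
      (F^[k] (α • Jstar) - Jstar).PosSemidef ∧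
      (F^[k] (α • Jstar) - F^[k + 1] (α • Jstar)).PosSemidef := by
    intro k
    induction k with
    | zero =>
      refine ⟨?_, ?_, ?_⟩
      · simp only [Function.iterate_zero_apply]
        exact (aux_pd_smul hα0 hJstar).posSemidef
      · simp only [Function.iterate_zero_apply]
        have he : α • Jstar - Jstar = (α - 1) • Jstar := by module
        rw [he]
        exact aux_psd_smul (by linarith) hJpsd
      · simp only [Function.iterate_zero_apply, zero_add, Function.iterate_one]
        have h := hsub α Jstar hα hJstar
        rw [hfix] at h
        exact h.posSemidef
    | succ k ih =>
      obtain ⟨hp, hj, hd⟩ := ih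
      have hp' : (F^[k + 1] (α • Jstar)).PosSemidef := by
        rw [Function.iterate_succ_apply']
        exact hFpsd _ hp
      refine ⟨hp', ?_, ?_⟩
      · have := hmono (F^[k] (α • Jstar)) Jstar hJpsd hj
        rw [hfix, ← Function.iterate_succ_apply' F k] at this
        exact this
      · have := hmono (F^[k] (α • Jstar)) (F^[k + 1] (α • Jstar)) hp' hd
        rwa [← Function.iterate_succ_apply' F k, ← Function.iterate_succ_apply' F (k + 1)] at this
  -- facts about the lower sequence B k = F^[k] L
  have hBfacts : ∀ k : ℕ, (F^[k] L).PosSemidef ∧ (Jstar - F^[k] L).PosSemidef ∧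
      (F^[k + 1] L - F^[k] L).PosSemidef := by
    intro k
    induction k with
    | zero =>
      refine ⟨?_, ?_, ?_⟩
      · simp only [Function.iterate_zero_apply]
        exact hL.posSemidef
      · simp only [Function.iterate_zero_apply]
        exact hJstarL
      · simp only [Function.iterate_zero_apply, zero_add, Function.iterate_one]
        exact (hbound L hL.posSemidef).1
    | succ k ih =>
      obtain ⟨hp, hj, hd⟩ := ih
      have hp' : (F^[k + 1] L).PosSemidef := by
        rw [Function.iterate_succ_apply']
        exact hFpsd _ hp
      refine ⟨hp', ?_, ?_⟩
      · have := hmono Jstar (F^[k] L) hp hj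
        rw [hfix, ← Function.iterate_succ_apply' F k] at this
        exact this
      · have := hmono (F^[k + 1] L) (F^[k] L) hp hd
        rwa [← Function.iterate_succ_apply' F (k + 1), ← Function.iterate_succ_apply' F k] at this
  -- facts about the squeezed sequence D k = F^[k] (F J0)
  have hDfacts : ∀ k : ℕ, (F^[k] (F J0)).PosSemidef ∧
      (F^[k] (F J0) - F^[k] L).PosSemidef ∧
      (F^[k] (α • Jstar) - F^[k] (F J0)).PosSemidef := by
    intro k
    induction k with
    | zero =>
      refine ⟨?_, ?_, ?_⟩
      · simp only [Function.iterate_zero_apply]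
        exact hFpsd J0 hJ0
      · simp only [Function.iterate_zero_apply]
        exact (hbound J0 hJ0).1
      · simp only [Function.iterate_zero_apply]
        exact hαJ
    | succ k ih =>
      obtain ⟨hp, hb, ha⟩ := ih
      have hp' : (F^[k + 1] (F J0)).PosSemidef := by
        rw [Function.iterate_succ_apply']
        exact hFpsd _ hp
      refine ⟨hp', ?_, ?_⟩
      · have := hmono (F^[k] (F J0)) (F^[k] L) (hBfacts k).1 hb
        rwa [← Function.iterate_succ_apply' F k (F J0), ← Function.iterate_succ_apply' F k L]
          at this
      · have := hmono (F^[k] (α • Jstar)) (F^[k] (F J0)) hp ha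
        rwa [← Function.iterate_succ_apply' F k (α • Jstar),
          ← Function.iterate_succ_apply' F k (F J0)] at this
  -- the descent lemma for the upper sequence
  have hupper : ∀ ε : ℝ, 0 < ε → ∃ N : ℕ, ∀ k ≥ N,
      ((1 + ε) • Jstar - F^[k] (α • Jstar)).PosSemidef := by
    intro ε hε
    set β := 1 + ε with hβdef
    have hβ1 : 1 < β := by rw [hβdef]; linarith
    have hβ0 : 0 < β := by linarith
    have hpd := hsub β Jstar hβ1 hJstar
    rw [hfix] at hpd
    obtain ⟨δ, hδ, hsep⟩ := aux_exists_eps hpd hJpsd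
    have hFβ : ((β - δ) • Jstar - F (β • Jstar)).PosSemidef := by
      have he : (β - δ) • Jstar - F (β • Jstar) = β • Jstar - F (β • Jstar) - δ • Jstar := by
        module
      rw [he]; exact hsep
    have hstep : ∀ a : ℝ, β ≤ a → ((a - δ) • Jstar - F (a • Jstar)).PosSemidef := by
      intro a ha
      rcases eq_or_lt_of_le ha with rfl | hlt
      · exact hFβ
      · have hs1 : 1 < a / β := (one_lt_div hβ0).mpr hlt
        have h1 := hsub (a / β) (β • Jstar) hs1 (aux_pd_smul hβ0 hJstar)
        rw [smul_smul, div_mul_cancel₀ a hβ0.ne'] at h1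
        have h2 : ((a / β) • ((β - δ) • Jstar) - (a / β) • F (β • Jstar)).PosSemidef := by
          rw [← smul_sub]
          exact aux_psd_smul (by positivity) hFβ
        have h3 : ((a - δ) • Jstar - (a / β) • ((β - δ) • Jstar)).PosSemidef := by
          rw [smul_smul, ← sub_smul]
          refine aux_psd_smul ?_ hJpsd
          have he : a / β * (β - δ) = a - a / β * δ := by field_simp
          rw [he]
          nlinarith [hs1.le, hδ.le]
        exact aux_psd_trans h3 (aux_psd_trans h2 h1.posSemidef)
    have hind : ∀ k : ℕ, ((max β (α - (k : ℝ) * δ)) • Jstar - F^[k] (α • Jstar)).PosSemidef := by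
      intro k
      induction k with
      | zero =>
        simp only [Function.iterate_zero_apply, Nat.cast_zero, zero_mul, sub_zero]
        rw [← sub_smul]
        exact aux_psd_smul (by have := le_max_right β α; linarith) hJpsd
      | succ k ih =>
        have hmax : β ≤ max β (α - (k : ℝ) * δ) := le_max_left _ _
        have h1 := hmono ((max β (α - (k : ℝ) * δ)) • Jstar) (F^[k] (α • Jstar)) (hAfacts k).1 ih
        rw [← Function.iterate_succ_apply' F k] at h1
        have h2 := hstep _ hmax
        have h3 : ((max β (α - ((k + 1 : ℕ) : ℝ) * δ)) • Jstar -
            (max β (α - (k : ℝ) * δ) - δ) • Jstar).PosSemidef := by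
          rw [← sub_smul]
          refine aux_psd_smul ?_ hJpsd
          have hkey : max β (α - (k : ℝ) * δ) - δ ≤ max β (α - ((k + 1 : ℕ) : ℝ) * δ) := by
            push_cast
            rcases le_total β (α - (k : ℝ) * δ) with h | h
            · rw [max_eq_right h]
              have := le_max_right β (α - ((k : ℝ) + 1) * δ)
              linarith
            · rw [max_eq_left h]
              have := le_max_left β (α - ((k : ℝ) + 1) * δ)
              linarith
          linarith
        exact aux_psd_trans h3 (aux_psd_trans h2 h1)
    refine ⟨Nat.ceil ((α - β) / δ), fun k hk => ?_⟩
    have hmaxeq : max β (α - (k : ℝ) * δ) = β := by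
      apply max_eq_left
      have h1 : (α - β) / δ ≤ (k : ℝ) := le_trans (Nat.le_ceil _) (by exact_mod_cast hk)
      rw [div_le_iff₀ hδ] at h1
      linarith
    have := hind k
    rwa [hmaxeq] at this
  -- the ascent lemma for the lower sequence
  have hlower : ∀ ε : ℝ, 0 < ε → ∃ N : ℕ, ∀ k ≥ N,
      (F^[k] L - (1 - ε) • Jstar).PosSemidef := by
    intro ε hε
    rcases le_or_gt 1 ε with hε1 | hε1
    · refine ⟨0, fun k _ => ?_⟩
      have h1 : (F^[k] L).PosSemidef := (hBfacts k).1
      have h2 : ((ε - 1) • Jstar).PosSemidef := aux_psd_smul (by linarith) hJpsd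
      have h3 := h1.add h2
      have he : F^[k] L + (ε - 1) • Jstar = F^[k] L - (1 - ε) • Jstar := by module
      rwa [he] at h3
    · set γ := 1 - ε with hγdef
      have hγ0 : 0 < γ := by rw [hγdef]; linarith
      have hγ1 : γ < 1 := by rw [hγdef]; linarith
      obtain ⟨t, ht, hLt⟩ := aux_exists_eps hL hJpsd
      set t1 := min t γ with ht1def
      have ht10 : 0 < t1 := lt_min ht hγ0
      have ht1γ : t1 ≤ γ := min_le_right _ _
      have hLt1 : (L - t1 • Jstar).PosSemidef := by
        have h3 : (t • Jstar - t1 • Jstar).PosSemidef := by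
          rw [← sub_smul]
          exact aux_psd_smul (sub_nonneg.mpr (min_le_left t γ)) hJpsd
        exact aux_psd_trans hLt h3
      have hγinv : 1 < 1 / γ := by
        rw [lt_div_iff₀ hγ0]; linarith
      have h1 := hsub (1 / γ) (γ • Jstar) hγinv (aux_pd_smul hγ0 hJstar)
      rw [smul_smul, one_div_mul_cancel hγ0.ne', one_smul, hfix] at h1
      have h2 : (F (γ • Jstar) - γ • Jstar).PosDef := by
        have h4 := aux_pd_smul hγ0 h1
        rw [smul_sub, smul_smul, mul_one_div_cancel hγ0.ne', one_smul] at h4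
        exact h4
      obtain ⟨δ, hδ, hsep⟩ := aux_exists_eps h2 hJpsd
      have hFγ : (F (γ • Jstar) - (γ + δ) • Jstar).PosSemidef := by
        have he : F (γ • Jstar) - (γ + δ) • Jstar = F (γ • Jstar) - γ • Jstar - δ • Jstar := by
          module
        rw [he]; exact hsep
      set δ' := t1 * δ / γ with hδ'def
      have hδ'0 : 0 < δ' := by positivity
      have hδ'δ : δ' ≤ δ := by
        rw [hδ'def, div_le_iff₀ hγ0]
        nlinarith [ht1γ, hδ.le]
      have hstep : ∀ a : ℝ, t1 ≤ a → a ≤ γ →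
          (F (a • Jstar) - (a + δ') • Jstar).PosSemidef := by
        intro a ha1 ha2
        have ha0 : 0 < a := lt_of_lt_of_le ht10 ha1
        rcases eq_or_lt_of_le ha2 with rfl | hlt
        · have h3 : ((γ + δ) • Jstar - (γ + δ') • Jstar).PosSemidef := by
            rw [← sub_smul]
            exact aux_psd_smul (by linarith) hJpsd
          exact aux_psd_trans hFγ h3
        · set s := a / γ with hsdef
          have hs0 : 0 < s := div_pos ha0 hγ0
          have hs1 : s < 1 := (div_lt_one hγ0).mpr hlt
          have hsinv : 1 < 1 / s := by rw [lt_div_iff₀ hs0]; linarith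
          have h4 := hsub (1 / s) (a • Jstar) hsinv (aux_pd_smul ha0 hJstar)
          rw [smul_smul] at h4
          have he1 : 1 / s * a = γ := by
            rw [hsdef]; field_simp
          rw [he1] at h4
          have h5 : (F (a • Jstar) - s • F (γ • Jstar)).PosSemidef := by
            have h6 := aux_pd_smul hs0 h4
            rw [smul_sub, smul_smul, mul_one_div_cancel hs0.ne', one_smul] at h6
            exact h6.posSemidef
          have h6 : (s • F (γ • Jstar) - s • ((γ + δ) • Jstar)).PosSemidef := by
            rw [← smul_sub]
            exact aux_psd_smul hs0.le hFγ
          have h7 : (s • ((γ + δ) • Jstar) - (a + δ') • Jstar).PosSemidef := by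
            rw [smul_smul, ← sub_smul]
            refine aux_psd_smul ?_ hJpsd
            have hsa : s * γ = a := by rw [hsdef]; field_simp
            have hst1 : t1 / γ ≤ s := by
              rw [hsdef]; gcongr
            have hd' : δ' = t1 / γ * δ := by rw [hδ'def]; ring
            nlinarith [hst1, hδ.le, hsa, hd']
          exact aux_psd_trans (aux_psd_trans h5 h6) h7
      have hind : ∀ k : ℕ, (F^[k] L - (min γ (t1 + (k : ℝ) * δ')) • Jstar).PosSemidef := by
        intro k
        induction k with
        | zero =>
          simp only [Function.iterate_zero_apply, Nat.cast_zero, zero_mul, add_zero]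
          rw [min_eq_right ht1γ]
          exact hLt1
        | succ k ih =>
          have ha1 : t1 ≤ min γ (t1 + (k : ℝ) * δ') := by
            refine le_min ht1γ ?_
            have : (0:ℝ) ≤ (k : ℝ) * δ' := by positivity
            linarith
          have ha2 : min γ (t1 + (k : ℝ) * δ') ≤ γ := min_le_left _ _
          have h1 := hmono (F^[k] L) ((min γ (t1 + (k : ℝ) * δ')) • Jstar)
            (aux_psd_smul (le_trans ht10.le ha1) hJpsd) ih
          rw [← Function.iterate_succ_apply' F k] at h1
          have h2 := hstep _ ha1 ha2
          have h3 : ((min γ (t1 + (k : ℝ) * δ') + δ') • Jstar -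
              (min γ (t1 + ((k + 1 : ℕ) : ℝ) * δ')) • Jstar).PosSemidef := by
            rw [← sub_smul]
            refine aux_psd_smul ?_ hJpsd
            push_cast
            rcases le_total γ (t1 + (k : ℝ) * δ') with h | h
            · rw [min_eq_left h]
              have := min_le_left γ (t1 + ((k : ℝ) + 1) * δ')
              linarith
            · rw [min_eq_right h]
              have := min_le_right γ (t1 + ((k : ℝ) + 1) * δ')
              have hq : ((k : ℝ) + 1) * δ' = (k : ℝ) * δ' + δ' := by ring
              linarith
          exact aux_psd_trans (aux_psd_trans h1 h2) h3
      refine ⟨Nat.ceil ((γ - t1) / δ'), fun k hk => ?_⟩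
      have hmineq : min γ (t1 + (k : ℝ) * δ') = γ := by
        apply min_eq_left
        have h1 : (γ - t1) / δ' ≤ (k : ℝ) := le_trans (Nat.le_ceil _) (by exact_mod_cast hk)
        rw [div_le_iff₀ hδ'0] at h1
        linarith
      have := hind k
      rwa [hmineq] at this
  -- convergence of the upper sequence
  have hAtend : Filter.Tendsto (fun k => F^[k] (α • Jstar)) Filter.atTop (nhds Jstar) := by
    have h0 : Filter.Tendsto (fun k => F^[k] (α • Jstar) - Jstar) Filter.atTop (nhds 0) := by
      apply aux_tendsto_zero hJpsd
      intro ε hε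
      obtain ⟨N, hN⟩ := hupper ε hε
      refine ⟨N, fun k hk => ⟨(hAfacts k).2.1, ?_⟩⟩
      have he : ε • Jstar - (F^[k] (α • Jstar) - Jstar) =
          (1 + ε) • Jstar - F^[k] (α • Jstar) := by module
      rw [he]
      exact hN k hk
    have := h0.add (tendsto_const_nhds (x := Jstar) (f := Filter.atTop))
    simpa using this
  -- convergence of the lower sequence
  have hBtend : Filter.Tendsto (fun k => F^[k] L) Filter.atTop (nhds Jstar) := by
    have h0 : Filter.Tendsto (fun k => Jstar - F^[k] L) Filter.atTop (nhds 0) := by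
      apply aux_tendsto_zero hJpsd
      intro ε hε
      obtain ⟨N, hN⟩ := hlower ε hε
      refine ⟨N, fun k hk => ⟨(hBfacts k).2.1, ?_⟩⟩
      have he : ε • Jstar - (Jstar - F^[k] L) = F^[k] L - (1 - ε) • Jstar := by module
      rw [he]
      exact hN k hk
    have := (tendsto_const_nhds (x := Jstar) (f := Filter.atTop)).sub h0
    simpa using this
  -- convergence of the squeezed sequence
  have hDtendZ : Filter.Tendsto (fun k => F^[k] (F J0) - F^[k] L) Filter.atTop (nhds 0) := by
    apply aux_tendsto_zero hJpsd
    intro ε hε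
    obtain ⟨N1, h1⟩ := hupper (ε / 2) (by positivity)
    obtain ⟨N2, h2⟩ := hlower (ε / 2) (by positivity)
    refine ⟨max N1 N2, fun k hk => ⟨(hDfacts k).2.1, ?_⟩⟩
    have ha := h1 k (le_trans (le_max_left _ _) hk)
    have hb := h2 k (le_trans (le_max_right _ _) hk)
    have hc := (hDfacts k).2.2
    have he : ε • Jstar - (F^[k] (F J0) - F^[k] L) =
        (F^[k] (α • Jstar) - F^[k] (F J0)) +
          (((1 + ε / 2) • Jstar - F^[k] (α • Jstar)) + (F^[k] L - (1 - ε / 2) • Jstar)) := by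
      module
    rw [he]
    exact hc.add (ha.add hb)
  have hDtend : Filter.Tendsto (fun k => F^[k] (F J0)) Filter.atTop (nhds Jstar) := by
    have := hDtendZ.add hBtend
    simpa using this
  have hJ0tend : Filter.Tendsto (fun ℓ => F^[ℓ] J0) Filter.atTop (nhds Jstar) := by
    have h0 : Filter.Tendsto (fun k => F^[k + 1] J0) Filter.atTop (nhds Jstar) := by
      have he : (fun k => F^[k + 1] J0) = fun k => F^[k] (F J0) := by
        funext k
        exact Function.iterate_succ_apply F k J0
      rw [he]
      exact hDtend
    exact (Filter.tendsto_add_atTop_iff_nat 1).mp h0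
  exact ⟨fun ℓ => (hAfacts ℓ).2.2, hAtend, fun ℓ => (hBfacts ℓ).2.2, hBtend, hJ0tend⟩
end

section
/- Let J be a symmetric n × n matrix with unit diagonal, let R = I − J, and suppose I − |R| ≻ 0, where |R| is the entrywise absolute value of R (the walk-summability condition). Then for any 0 < ω < λ_min(I − |R|) with ω < 1, the matrix J − ωI is a symmetric H-matrix with nonnegative diagonal, and hence factors as J − ωI = VVᵀ where each column of V has at most 2 nonzero entries. -/
open Matrix
open scoped Pointwise

/-- The comparison matrix of a square matrix: absolute values on the diagonal,
negated absolute values off the diagonal. -/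
def compMat {n : ℕ} (X : Matrix (Fin n) (Fin n) ℝ) : Matrix (Fin n) (Fin n) ℝ :=
  Matrix.of fun i j => if i = j then |X i i| else -|X i j|

/-- A symmetric real matrix is an H-matrix if all eigenvalues of its comparison
matrix have positive real part. -/
def IsHMatrix {n : ℕ} (X : Matrix (Fin n) (Fin n) ℝ) : Prop :=
  ∀ μ : ℂ, μ ∈ spectrum ℂ ((compMat X).map (algebraMap ℝ ℂ)) → 0 < μ.re

namespace Stmt19Aux

open scoped ComplexOrder

lemma sign_mul_self (x : ℝ) : Real.sign x * x = |x| := by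
  rcases lt_trichotomy x 0 with h | h | h
  · rw [Real.sign_of_neg h, abs_of_neg h]; ring
  · simp [h]
  · rw [Real.sign_of_pos h, abs_of_pos h]; ring

lemma sign_mul_abs (x : ℝ) : Real.sign x * |x| = x := by
  rcases lt_trichotomy x 0 with h | h | h
  · rw [Real.sign_of_neg h, abs_of_neg h]; ring
  · simp [h]
  · rw [Real.sign_of_pos h, abs_of_pos h]; ring

variable {n : ℕ}

/-- A hermitian real matrix with positive eigenvalues is positive definite. -/
lemma posDef_of_eigenvalues_pos {A : Matrix (Fin n) (Fin n) ℝ} (hA : A.IsHermitian)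
    (h : ∀ i, 0 < hA.eigenvalues i) : A.PosDef := by
  have hsd : A.PosSemidef := hA.posSemidef_iff_eigenvalues_nonneg.mpr fun i => (h i).le
  have hdet : IsUnit A := by
    rw [Matrix.isUnit_iff_isUnit_det]
    refine isUnit_iff_ne_zero.mpr ?_
    rw [hA.det_eq_prod_eigenvalues]
    exact ne_of_gt (Finset.prod_pos fun i _ => by simpa using h i)
  refine posDef_iff_dotProduct_mulVec.mpr ⟨hA, fun x hx => ?_⟩
  refine lt_of_le_of_ne (hsd.dotProduct_mulVec_nonneg x) (fun h0 => hx ?_)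
  have hAx : A *ᵥ x = 0 := (hsd.dotProduct_mulVec_zero_iff x).mp h0.symm
  have hinj := Matrix.mulVec_injective_iff_isUnit.mpr hdet
  have : A *ᵥ x = A *ᵥ 0 := by simpa using hAx
  exact hinj this

/-- The complexification of a real positive definite matrix is positive definite. -/
lemma posDef_map_complex {C : Matrix (Fin n) (Fin n) ℝ} (hC : C.PosDef) :
    (C.map (algebraMap ℝ ℂ)).PosDef := by
  have hCs : ∀ i j, C j i = C i j := fun i j => by simpa using hC.1.apply i j
  have hH : (C.map (algebraMap ℝ ℂ)).IsHermitian :=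
    hC.1.map (algebraMap ℝ ℂ) fun a => by
      simp [Complex.star_def, Complex.conj_ofReal]
  refine posDef_iff_dotProduct_mulVec.mpr ⟨hH, fun x hx => ?_⟩
  set a : Fin n → ℝ := fun i => (x i).re with ha
  set b : Fin n → ℝ := fun i => (x i).im with hb
  have expand : star x ⬝ᵥ ((C.map (algebraMap ℝ ℂ)) *ᵥ x)
      = ∑ i, ∑ j, (starRingEnd ℂ) (x i) * ((C i j : ℂ) * x j) := by
    simp only [dotProduct, Matrix.mulVec, Matrix.map_apply, Pi.star_apply,
      Complex.star_def, Finset.mul_sum, Complex.coe_algebraMap]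
  have hre_calc : (star x ⬝ᵥ ((C.map (algebraMap ℝ ℂ)) *ᵥ x)).re
      = ∑ i, ∑ j, C i j * (a i * a j + b i * b j) := by
    rw [expand, Complex.re_sum]
    refine Finset.sum_congr rfl fun i _ => ?_
    rw [Complex.re_sum]
    refine Finset.sum_congr rfl fun j _ => ?_
    simp only [Complex.mul_re, Complex.mul_im, Complex.conj_re, Complex.conj_im,
      Complex.ofReal_re, Complex.ofReal_im, ha, hb]
    ring
  have him_calc : (star x ⬝ᵥ ((C.map (algebraMap ℝ ℂ)) *ᵥ x)).im
      = ∑ i, ∑ j, C i j * (a i * b j - b i * a j) := by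
    rw [expand, Complex.im_sum]
    refine Finset.sum_congr rfl fun i _ => ?_
    rw [Complex.im_sum]
    refine Finset.sum_congr rfl fun j _ => ?_
    simp only [Complex.mul_re, Complex.mul_im, Complex.conj_re, Complex.conj_im,
      Complex.ofReal_re, Complex.ofReal_im, ha, hb]
    ring
  have him : (star x ⬝ᵥ ((C.map (algebraMap ℝ ℂ)) *ᵥ x)).im = 0 := by
    rw [him_calc]
    have hswap : ∑ i, ∑ j, C i j * (b i * a j) = ∑ i, ∑ j, C i j * (a i * b j) := by
      rw [Finset.sum_comm]
      refine Finset.sum_congr rfl fun j _ => Finset.sum_congr rfl fun i _ => ?_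
      rw [hCs j i]; ring
    simp only [mul_sub, Finset.sum_sub_distrib]
    rw [hswap, sub_self]
  have hre : 0 < (star x ⬝ᵥ ((C.map (algebraMap ℝ ℂ)) *ᵥ x)).re := by
    rw [hre_calc]
    have hsplit : ∑ i, ∑ j, C i j * (a i * a j + b i * b j)
        = a ⬝ᵥ (C *ᵥ a) + b ⬝ᵥ (C *ᵥ b) := by
      simp only [dotProduct, Matrix.mulVec, Finset.mul_sum, ← Finset.sum_add_distrib]
      exact Finset.sum_congr rfl fun i _ => Finset.sum_congr rfl fun j _ => by ring
    rw [hsplit]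
    have hab : a ≠ 0 ∨ b ≠ 0 := by
      by_contra hcon
      push_neg at hcon
      obtain ⟨ha0, hb0⟩ := hcon
      exact hx (funext fun i => Complex.ext (congrFun ha0 i) (congrFun hb0 i))
    have hsa : 0 ≤ a ⬝ᵥ (C *ᵥ a) := by simpa using hC.posSemidef.dotProduct_mulVec_nonneg a
    have hsb : 0 ≤ b ⬝ᵥ (C *ᵥ b) := by simpa using hC.posSemidef.dotProduct_mulVec_nonneg b
    rcases hab with h | h
    · have := hC.dotProduct_mulVec_pos h
      simp only [star_trivial] at this
      linarith
    · have := hC.dotProduct_mulVec_pos h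
      simp only [star_trivial] at this
      linarith
  rw [Complex.lt_def]
  exact ⟨by simpa using hre, by simpa using him.symm⟩

/-- spectrum of a complex hermitian matrix is the range of its (real) eigenvalues. -/
lemma spectrum_eq_range {M : Matrix (Fin n) (Fin n) ℂ} (hM : M.IsHermitian) :
    spectrum ℂ M = Set.range (fun i => (hM.eigenvalues i : ℂ)) := by
  conv_lhs => rw [hM.spectral_theorem, Unitary.conjStarAlgAut_apply, Unitary.spectrum_star_right_conjugate]
  rw [spectrum_diagonal]
  rfl

/-- The entries of W: the columns of the factorization. -/
noncomputable def Wmat (X : Matrix (Fin n) (Fin n) ℝ) (u : Fin n → ℝ) (i j k : Fin n) : ℝ :=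
  if i = j then (if k = i then Real.sqrt (u i) / u i else 0)
  else if i < j then
    (if k = i then Real.sqrt (u i * u j * |X i j|) / u i
     else if k = j then Real.sign (X i j) * Real.sqrt (u i * u j * |X i j|) / u j
     else 0)
  else 0

lemma Wmat_support {X : Matrix (Fin n) (Fin n) ℝ} {u : Fin n → ℝ} {i j k : Fin n}
    (h : Wmat X u i j k ≠ 0) : k = i ∨ k = j := by
  unfold Wmat at h
  split_ifs at h <;> tauto

lemma sign_sq_abs (x : ℝ) : Real.sign x * Real.sign x * |x| = |x| := by
  rw [mul_assoc, sign_mul_abs, sign_mul_self]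

lemma Wmat_lt {X : Matrix (Fin n) (Fin n) ℝ} {u : Fin n → ℝ} {i j k : Fin n}
    (h : Wmat X u i j k ≠ 0) : i = j ∨ i < j := by
  unfold Wmat at h
  split_ifs at h <;> tauto

lemma sum_Wmat (X : Matrix (Fin n) (Fin n) ℝ) (hsymm : ∀ i j, X j i = X i j)
    (u : Fin n → ℝ) (hu : ∀ i, 0 < u i)
    (h1 : ∀ i, X i i * u i - ∑ j ∈ Finset.univ.erase i, |X i j| * u j = 1) (p q : Fin n) :
    ∑ x : Fin n × Fin n, Wmat X u x.1 x.2 p * Wmat X u x.1 x.2 q = X p q := by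
  classical
  have hsq : ∀ i j, Real.sqrt (u i * u j * |X i j|) * Real.sqrt (u i * u j * |X i j|)
      = u i * u j * |X i j| := fun i j =>
    Real.mul_self_sqrt (mul_nonneg (mul_nonneg (hu i).le (hu j).le) (abs_nonneg _))
  have hune : ∀ i, u i ≠ 0 := fun i => (hu i).ne'
  by_cases hpq : p = q
  · subst hpq
    rw [Fintype.sum_prod_type]
    have inner_eq : ∀ i, ∑ j, Wmat X u i j p * Wmat X u i j p =
        if i = p then 1 / u p + ∑ j, (if p < j then u j * |X p j| / u p else 0)
        else (if i < p then u i * |X i p| / u p else 0) := by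
      intro i
      by_cases hip : i = p
      · rw [hip, if_pos rfl]
        have hterm : ∀ j, Wmat X u p j p * Wmat X u p j p
            = (if j = p then 1 / u p else 0) + (if p < j then u j * |X p j| / u p else 0) := by
          intro j
          by_cases hjp : j = p
          · rw [hjp, if_pos rfl, if_neg (lt_irrefl p)]
            have hW : Wmat X u p p p = Real.sqrt (u p) / u p := by
              unfold Wmat; rw [if_pos rfl, if_pos rfl]
            rw [hW, add_zero]
            rw [div_mul_div_comm, Real.mul_self_sqrt (hu p).le]
            field_simp
          · rw [if_neg hjp]
            by_cases hpj : p < j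
            · have hW : Wmat X u p j p = Real.sqrt (u p * u j * |X p j|) / u p := by
                unfold Wmat
                rw [if_neg (fun h => hjp (h.symm)), if_pos hpj, if_pos rfl]
              rw [hW, if_pos hpj, zero_add]
              rw [div_mul_div_comm, hsq]
              rw [show u p * u j * |X p j| = (u j * |X p j|) * u p by ring]
              rw [mul_div_mul_right _ _ (hune p)]
            · have hW : Wmat X u p j p = 0 := by
                unfold Wmat
                rw [if_neg (fun h => hjp (h.symm)), if_neg hpj]
              rw [hW, if_neg hpj, zero_mul, zero_add]
        rw [Finset.sum_congr rfl (fun j _ => hterm j), Finset.sum_add_distrib,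
          Finset.sum_ite_eq' Finset.univ p (fun _ => 1 / u p)]
        simp
      · rw [if_neg hip]
        rw [Finset.sum_eq_single p]
        · by_cases hipl : i < p
          · have hW : Wmat X u i p p
                = Real.sign (X i p) * Real.sqrt (u i * u p * |X i p|) / u p := by
              unfold Wmat
              rw [if_neg hip, if_pos hipl, if_neg (fun h => hip h.symm), if_pos rfl]
            rw [hW, if_pos hipl]
            rw [div_mul_div_comm]
            rw [show Real.sign (X i p) * Real.sqrt (u i * u p * |X i p|)
                * (Real.sign (X i p) * Real.sqrt (u i * u p * |X i p|))
                = Real.sign (X i p) * Real.sign (X i p)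
                  * (Real.sqrt (u i * u p * |X i p|) * Real.sqrt (u i * u p * |X i p|)) by ring]
            rw [hsq]
            rw [show Real.sign (X i p) * Real.sign (X i p) * (u i * u p * |X i p|)
                = (Real.sign (X i p) * Real.sign (X i p) * |X i p|) * u i * u p by ring]
            rw [sign_sq_abs]
            rw [show |X i p| * u i * u p = (u i * |X i p|) * u p by ring]
            rw [mul_div_mul_right _ _ (hune p)]
          · have hW : Wmat X u i p p = 0 := by
              unfold Wmat; rw [if_neg hip, if_neg hipl]
            rw [hW, if_neg hipl, zero_mul]
        · intro j _ hjp
          have hW : Wmat X u i j p = 0 := by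
            by_contra h
            rcases Wmat_support h with h' | h'
            · exact hip h'.symm
            · exact hjp h'.symm
          rw [hW, zero_mul]
        · intro h; exact absurd (Finset.mem_univ p) h
    rw [Finset.sum_congr rfl (fun i _ => inner_eq i)]
    rw [← Finset.sum_erase_add _ _ (Finset.mem_univ p), if_pos rfl]
    have herase : ∀ i ∈ Finset.univ.erase p,
        (if i = p then 1 / u p + ∑ j, (if p < j then u j * |X p j| / u p else 0)
         else (if i < p then u i * |X i p| / u p else 0))
        = (if i < p then u i * |X i p| / u p else 0) := by
      intro i hi
      rw [if_neg (Finset.ne_of_mem_erase hi)]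
    rw [Finset.sum_congr rfl herase]
    have hsum2 : ∑ j, (if p < j then u j * |X p j| / u p else 0)
        = ∑ j ∈ Finset.univ.erase p, (if p < j then u j * |X p j| / u p else 0) := by
      rw [Finset.sum_erase _ (by rw [if_neg (lt_irrefl p)])]
    rw [hsum2]
    have hcomb : ∑ j ∈ Finset.univ.erase p,
        ((if p < j then u j * |X p j| / u p else 0)
          + (if j < p then u j * |X j p| / u p else 0))
        = ∑ j ∈ Finset.univ.erase p, |X p j| * u j / u p := by
      refine Finset.sum_congr rfl fun j hj => ?_
      rcases (Finset.ne_of_mem_erase hj).lt_or_gt with h | h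
      · rw [if_neg (asymm h), if_pos h, zero_add, hsymm j p]; ring
      · rw [if_pos h, if_neg (asymm h), add_zero]; ring
    have hsum3 : (∑ j ∈ Finset.univ.erase p, if p < j then u j * |X p j| / u p else 0)
        + (∑ j ∈ Finset.univ.erase p, if j < p then u j * |X j p| / u p else 0)
        = (X p p * u p - 1) / u p := by
      rw [← Finset.sum_add_distrib, hcomb, ← Finset.sum_div]
      have h1p := h1 p
      have hXp : ∑ j ∈ Finset.univ.erase p, |X p j| * u j = X p p * u p - 1 := by linarith
      rw [hXp]
    have hfin : (X p p * u p - 1) / u p + 1 / u p = X p p := by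
      rw [← add_div, sub_add_cancel, mul_div_assoc, div_self (hune p), mul_one]
    linarith [hsum3, hfin]
  · rcases Ne.lt_or_gt hpq with hlt | hlt
    · rw [Finset.sum_eq_single (p, q)]
      · have hW1 : Wmat X u p q p = Real.sqrt (u p * u q * |X p q|) / u p := by
          unfold Wmat
          rw [if_neg (ne_of_lt hlt), if_pos hlt, if_pos rfl]
        have hW2 : Wmat X u p q q
            = Real.sign (X p q) * Real.sqrt (u p * u q * |X p q|) / u q := by
          unfold Wmat
          rw [if_neg (ne_of_lt hlt), if_pos hlt, if_neg (ne_of_gt hlt), if_pos rfl]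
        rw [hW1, hW2, div_mul_div_comm]
        rw [show Real.sqrt (u p * u q * |X p q|)
            * (Real.sign (X p q) * Real.sqrt (u p * u q * |X p q|))
            = Real.sign (X p q)
              * (Real.sqrt (u p * u q * |X p q|) * Real.sqrt (u p * u q * |X p q|)) by ring]
        rw [hsq]
        rw [show Real.sign (X p q) * (u p * u q * |X p q|)
            = (Real.sign (X p q) * |X p q|) * (u p * u q) by ring]
        rw [mul_div_assoc, div_self (mul_ne_zero (hune p) (hune q)), mul_one, sign_mul_abs]
      · rintro ⟨i, j⟩ _ hx
        show Wmat X u i j p * Wmat X u i j q = 0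
        by_contra hcon
        rcases mul_ne_zero_iff.mp hcon with ⟨hf, hg⟩
        rcases Wmat_support hf with hpi | hpj
        · rcases Wmat_support hg with hqi | hqj
          · exact hpq (hpi.trans hqi.symm)
          · exact hx (Prod.ext hpi.symm hqj.symm)
        · rcases Wmat_support hg with hqi | hqj
          · rcases Wmat_lt hf with h' | h'
            · exact hpq (hpj.trans (h'.symm ▸ hqi.symm))
            · subst hpj; subst hqi
              exact absurd hlt (asymm h')
          · exact hpq (hpj.trans hqj.symm)
      · intro h; exact absurd (Finset.mem_univ _) h
    · rw [Finset.sum_eq_single (q, p)]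
      · have hW1 : Wmat X u q p p
            = Real.sign (X q p) * Real.sqrt (u q * u p * |X q p|) / u p := by
          unfold Wmat
          rw [if_neg (ne_of_lt hlt), if_pos hlt, if_neg (ne_of_gt hlt), if_pos rfl]
        have hW2 : Wmat X u q p q = Real.sqrt (u q * u p * |X q p|) / u q := by
          unfold Wmat
          rw [if_neg (ne_of_lt hlt), if_pos hlt, if_pos rfl]
        rw [hW1, hW2, div_mul_div_comm]
        rw [show Real.sign (X q p) * Real.sqrt (u q * u p * |X q p|)
            * Real.sqrt (u q * u p * |X q p|)
            = Real.sign (X q p)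
              * (Real.sqrt (u q * u p * |X q p|) * Real.sqrt (u q * u p * |X q p|)) by ring]
        rw [hsq]
        rw [show Real.sign (X q p) * (u q * u p * |X q p|)
            = (Real.sign (X q p) * |X q p|) * (u p * u q) by ring]
        rw [mul_div_assoc, div_self (mul_ne_zero (hune p) (hune q)), mul_one, sign_mul_abs,
          hsymm p q]
      · rintro ⟨i, j⟩ _ hx
        show Wmat X u i j p * Wmat X u i j q = 0
        by_contra hcon
        rcases mul_ne_zero_iff.mp hcon with ⟨hf, hg⟩
        rcases Wmat_support hf with hpi | hpj
        · rcases Wmat_support hg with hqi | hqj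
          · exact hpq (hpi.trans hqi.symm)
          · rcases Wmat_lt hf with h' | h'
            · exact hpq (hpi.trans (h' ▸ hqj.symm))
            · subst hpi; subst hqj
              exact absurd hlt (asymm h')
        · rcases Wmat_support hg with hqi | hqj
          · exact hx (Prod.ext hqi.symm hpj.symm)
          · exact hpq (hpj.trans hqj.symm)
      · intro h; exact absurd (Finset.mem_univ _) h

/-- The key factorization lemma. -/
lemma exists_factor (X : Matrix (Fin n) (Fin n) ℝ) (hsymm : ∀ i j, X j i = X i j)
    (u : Fin n → ℝ) (hu : ∀ i, 0 < u i)
    (h1 : ∀ i, X i i * u i - ∑ j ∈ Finset.univ.erase i, |X i j| * u j = 1) :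
    ∃ V : Matrix (Fin n) (Fin (n * n)) ℝ, X = V * Vᵀ ∧
      ∀ c : Fin (n * n), (Finset.univ.filter fun k => V k c ≠ 0).card ≤ 2 := by
  classical
  set e : Fin n × Fin n ≃ Fin (n * n) := finProdFinEquiv
  refine ⟨Matrix.of fun k c => Wmat X u (e.symm c).1 (e.symm c).2 k, ?_, ?_⟩
  · ext p q
    rw [Matrix.mul_apply]
    simp only [Matrix.transpose_apply, Matrix.of_apply]
    rw [show (∑ c : Fin (n * n), Wmat X u (e.symm c).1 (e.symm c).2 p *
          Wmat X u (e.symm c).1 (e.symm c).2 q)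
        = ∑ x : Fin n × Fin n, Wmat X u x.1 x.2 p * Wmat X u x.1 x.2 q from
      Equiv.sum_comp e.symm (fun x => Wmat X u x.1 x.2 p * Wmat X u x.1 x.2 q)]
    exact (sum_Wmat X hsymm u hu h1 p q).symm
  · intro c
    have hsub : (Finset.univ.filter fun k => (Matrix.of fun k c =>
        Wmat X u (e.symm c).1 (e.symm c).2 k) k c ≠ 0)
        ⊆ {(e.symm c).1, (e.symm c).2} := by
      intro k hk
      simp only [Finset.mem_filter, Matrix.of_apply] at hk
      rcases Wmat_support (Finset.mem_filter.mp hk).2 with h | h <;> simp [h]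
    calc _ ≤ ({(e.symm c).1, (e.symm c).2} : Finset (Fin n)).card := Finset.card_le_card hsub
    _ ≤ 2 := Finset.card_insert_le _ _ |>.trans (by simp)

end Stmt19Aux

theorem stmt_19 {n : ℕ} (J R : Matrix (Fin n) (Fin n) ℝ)
    (hJsymm : J.IsSymm) (hJdiag : ∀ i, J i i = 1)
    (hR : R = 1 - J)
    (hws : ((1 : Matrix (Fin n) (Fin n) ℝ)
      - Matrix.of fun i j => |R i j|).PosDef)
    (ω : ℝ) (hω0 : 0 < ω) (hω1 : ω < 1)
    (hωmin : ∀ μ ∈ spectrum ℝ ((1 : Matrix (Fin n) (Fin n) ℝ)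
      - Matrix.of fun i j => |R i j|), ω < μ) :
    (J - ω • 1).IsSymm ∧
    (∀ i, 0 ≤ (J - ω • (1 : Matrix (Fin n) (Fin n) ℝ)) i i) ∧
    IsHMatrix (J - ω • 1) ∧
    ∃ (m : ℕ) (V : Matrix (Fin n) (Fin m) ℝ),
      J - ω • (1 : Matrix (Fin n) (Fin n) ℝ) = V * Vᵀ ∧
      ∀ c : Fin m, (Finset.univ.filter fun i => V i c ≠ 0).card ≤ 2 := by
  classical
  open Stmt19Aux in
  set X : Matrix (Fin n) (Fin n) ℝ := J - ω • 1 with hX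
  have hXd : ∀ i, X i i = 1 - ω := fun i => by
    simp [hX, Matrix.sub_apply, Matrix.smul_apply, Matrix.one_apply, hJdiag i]
  have hXoff : ∀ i j, i ≠ j → X i j = J i j := by
    intro i j h
    simp [hX, Matrix.sub_apply, Matrix.smul_apply, Matrix.one_apply_ne h]
  have hRoff : ∀ i j, i ≠ j → R i j = -(J i j) := by
    intro i j h
    simp [hR, Matrix.sub_apply, Matrix.one_apply_ne h]
  have hRdiag : ∀ i, R i i = 0 := fun i => by
    simp [hR, Matrix.sub_apply, Matrix.one_apply, hJdiag i]
  have hJs : ∀ i j, J j i = J i j := fun i j => by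
    conv_lhs => rw [← hJsymm]
    simp [Matrix.transpose_apply]
  have hXsymm : ∀ i j, X j i = X i j := by
    intro i j
    by_cases h : i = j
    · rw [h]
    · rw [hXoff j i (fun hh => h hh.symm), hXoff i j h, hJs i j]
  have hω1' : (0:ℝ) ≤ 1 - ω := by linarith
  set Aabs : Matrix (Fin n) (Fin n) ℝ :=
    (1 : Matrix (Fin n) (Fin n) ℝ) - Matrix.of fun i j => |R i j| with hAabs
  have hCA : compMat X = Aabs - ω • 1 := by
    ext i j
    by_cases h : i = j
    · subst h
      simp [compMat, hAabs, Matrix.sub_apply, Matrix.smul_apply, Matrix.one_apply,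
        hXd i, hRdiag i, abs_of_nonneg hω1']
    · simp [compMat, h, hAabs, Matrix.sub_apply, Matrix.smul_apply,
        Matrix.one_apply_ne h, hXoff i j h, hRoff i j h, abs_neg]
  have hsmulH : (ω • (1 : Matrix (Fin n) (Fin n) ℝ)).IsHermitian := by
    ext i j
    simp [Matrix.conjTranspose_apply, Matrix.smul_apply, Matrix.one_apply, eq_comm]
  have hCH : (compMat X).IsHermitian := by
    rw [hCA]; exact hws.1.sub hsmulH
  have hCpos : (compMat X).PosDef := by
    apply posDef_of_eigenvalues_pos hCH
    intro i
    have hmem : hCH.eigenvalues i ∈ spectrum ℝ (compMat X) :=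
      hCH.eigenvalues_mem_spectrum_real i
    have hsp : spectrum ℝ (compMat X) = spectrum ℝ Aabs - ({ω} : Set ℝ) := by
      rw [hCA, show (ω • (1 : Matrix (Fin n) (Fin n) ℝ))
          = algebraMap ℝ (Matrix (Fin n) (Fin n) ℝ) ω from
        (Algebra.algebraMap_eq_smul_one ω).symm, ← spectrum.sub_singleton_eq]
    rw [hsp] at hmem
    obtain ⟨μ, hμ, ν, hν, hsub⟩ := Set.mem_sub.mp hmem
    rw [Set.mem_singleton_iff] at hν
    subst hν
    have := hωmin μ hμ
    linarith [hsub.symm.le, hsub.le]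
  have hCdet : IsUnit (compMat X).det := hCpos.det_pos.ne'.isUnit
  set u : Fin n → ℝ := (compMat X)⁻¹ *ᵥ (fun _ => 1) with hu_def
  have hCu : (compMat X) *ᵥ u = fun _ => (1:ℝ) := by
    rw [hu_def, Matrix.mulVec_mulVec, Matrix.mul_nonsing_inv _ hCdet, Matrix.one_mulVec]
  have hCdiag : ∀ i, compMat X i i = 1 - ω := fun i => by
    simp [compMat, hXd i, abs_of_nonneg hω1']
  have hCoff : ∀ i j, i ≠ j → compMat X i j = -|X i j| := fun i j h => by
    simp [compMat, h]
  have hexp : ∀ i, ∑ j, compMat X i j * u j = 1 := by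
    intro i
    simpa [Matrix.mulVec, dotProduct] using congrFun hCu i
  -- nonnegativity of u
  have hu_nonneg : ∀ i, 0 ≤ u i := by
    set mv : Fin n → ℝ := fun i => max (-(u i)) 0 with hmv
    set pv : Fin n → ℝ := fun i => max (u i) 0 with hpv
    have hm0 : ∀ i, 0 ≤ mv i := fun i => le_max_right _ _
    have hp0 : ∀ i, 0 ≤ pv i := fun i => le_max_right _ _
    have horth : ∀ i, mv i * pv i = 0 := by
      intro i
      rcases le_total (u i) 0 with h | h
      · rw [hpv]; simp only [max_eq_right h, mul_zero]
      · rw [hmv]; simp only [max_eq_right (neg_nonpos.mpr h), zero_mul]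
    have hmpu : mv = pv - u := by
      funext i
      rcases le_total (u i) 0 with h | h
      · simp [hmv, hpv, max_eq_left (neg_nonneg.mpr h), max_eq_right h]
      · simp [hmv, hpv, max_eq_right (neg_nonpos.mpr h), max_eq_left h]
    have hkey : mv ⬝ᵥ ((compMat X) *ᵥ mv) ≤ 0 := by
      rw [hmpu, Matrix.mulVec_sub, dotProduct_sub, hCu]
      have hone : (pv - u) ⬝ᵥ (fun _ => (1:ℝ)) = ∑ i, (pv - u) i := by
        simp [dotProduct]
      have hone' : 0 ≤ (pv - u) ⬝ᵥ (fun _ => (1:ℝ)) := by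
        rw [hone]
        refine Finset.sum_nonneg fun i _ => ?_
        have := hm0 i
        rw [hmpu] at this
        exact this
      have hmain : (pv - u) ⬝ᵥ ((compMat X) *ᵥ pv) ≤ 0 := by
        simp only [dotProduct, Matrix.mulVec]
        refine Finset.sum_nonpos fun i _ => ?_
        rw [Finset.mul_sum]
        refine Finset.sum_nonpos fun j _ => ?_
        by_cases h : i = j
        · subst h
          have h1 := horth i
          rw [hmpu] at h1
          calc (pv - u) i * (compMat X i i * pv i)
              = compMat X i i * ((pv - u) i * pv i) := by ring
          _ = 0 := by rw [show (pv - u) i * pv i = 0 from h1, mul_zero]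
          _ ≤ 0 := le_rfl
        · have hoff : compMat X i j ≤ 0 := by rw [hCoff i j h]; simp [abs_nonneg]
          have hmi : 0 ≤ (pv - u) i := by rw [← hmpu]; exact hm0 i
          nlinarith [mul_nonneg hmi (hp0 j), hoff]
      linarith
    intro i
    by_contra hneg
    push_neg at hneg
    have hmne : mv ≠ 0 := by
      intro h0
      have := congrFun h0 i
      simp only [hmv, Pi.zero_apply] at this
      have h2 : -(u i) ≤ 0 := by rw [← this]; exact le_max_left _ _
      linarith
    have := hCpos.dotProduct_mulVec_pos hmne
    simp only [star_trivial] at this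
    linarith
  have hu_pos : ∀ i, 0 < u i := by
    intro i
    have hsplit : ∑ j, compMat X i j * u j
        = compMat X i i * u i + ∑ j ∈ Finset.univ.erase i, compMat X i j * u j :=
      (Finset.add_sum_erase _ _ (Finset.mem_univ i)).symm
    have hrest : ∑ j ∈ Finset.univ.erase i, compMat X i j * u j ≤ 0 := by
      refine Finset.sum_nonpos fun j hj => ?_
      have hji : j ≠ i := (Finset.mem_erase.mp hj).1
      have : compMat X i j ≤ 0 := by rw [hCoff i j (fun h => hji h.symm)]; simp [abs_nonneg]
      nlinarith [mul_nonneg (neg_nonneg.mpr this) (hu_nonneg j)]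
    have h1le : 1 ≤ compMat X i i * u i := by
      have := hexp i
      linarith [hsplit]
    rw [hCdiag i] at h1le
    nlinarith [hω1', hu_nonneg i]
  have h1 : ∀ i, X i i * u i - ∑ j ∈ Finset.univ.erase i, |X i j| * u j = 1 := by
    intro i
    have hsplit : ∑ j, compMat X i j * u j
        = compMat X i i * u i + ∑ j ∈ Finset.univ.erase i, compMat X i j * u j :=
      (Finset.add_sum_erase _ _ (Finset.mem_univ i)).symm
    have herase : ∑ j ∈ Finset.univ.erase i, compMat X i j * u j
        = -∑ j ∈ Finset.univ.erase i, |X i j| * u j := by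
      rw [← Finset.sum_neg_distrib]
      refine Finset.sum_congr rfl fun j hj => ?_
      have hji : j ≠ i := (Finset.mem_erase.mp hj).1
      rw [hCoff i j (fun h => hji h.symm)]
      ring
    have hXC : X i i = compMat X i i := by rw [hCdiag i, hXd i]
    have := hexp i
    rw [hsplit, herase] at this
    rw [hXC]
    linarith
  refine ⟨?_, ?_, ?_, ?_⟩
  · show Xᵀ = X
    ext i j
    rw [Matrix.transpose_apply, hXsymm i j]
  · intro i
    show 0 ≤ X i i
    rw [hXd i]
    linarith
  · intro μ hμ
    have hCc := posDef_map_complex hCpos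
    rw [spectrum_eq_range hCc.1] at hμ
    obtain ⟨i, rfl⟩ := hμ
    simpa using hCc.eigenvalues_pos i
  · obtain ⟨V, hV1, hV2⟩ := exists_factor X hXsymm u hu_pos h1
    exact ⟨n * n, V, hV1, hV2⟩
end
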